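/- arXiv:1805.11608 — 2 statements merged into one kernel-verified Lean document; each statement's English description precedes it below -/
import Mathlib

section
/- Let (X, ≼) be a quasi-ordered set. If every increasing chain of chains in IC(X, ≼) (i.e., every ordinal-indexed family (A_γ)_{γ<δ} of increasing chains with γ < γ' < δ implying A_γ ⊑ A_{γ'} and not A_{γ'} ⊑ A_γ) is indexed by a countable ordinal δ, then for every increasing chain A in IC(X, ≼) there exists a maximal increasing chain B with A ⊑ B. -/
universe u

/-- An increasing chain in a quasi-ordered set `(X, r)`: an ordinal `len` together with a
family of elements of `X` indexed by the ordinals below `len`, such that `β < γ` implies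
`x_β ≺ x_γ` (i.e. `x_β ≼ x_γ` and not `x_γ ≼ x_β`). -/
structure IncChain (X : Type u) (r : X → X → Prop) : Type (u + 1) where
  len : Ordinal.{u}
  val : (β : Ordinal.{u}) → β < len → X
  inc : ∀ (β γ : Ordinal.{u}) (hβ : β < len) (hγ : γ < len), β < γ →
    r (val β hβ) (val γ hγ) ∧ ¬ r (val γ hγ) (val β hβ)

namespace IncChain

variable {X : Type u} {r : X → X → Prop}

/-- The domination quasi-order `⊑` on increasing chains. -/
def Le (A B : IncChain X r) : Prop :=
  ∀ (β : Ordinal.{u}) (hβ : β < A.len), ∃ (γ : Ordinal.{u}) (hγ : γ < B.len),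
    r (A.val β hβ) (B.val γ hγ)

/-- The equivalence `≐` induced by `⊑`. -/
def Equiv (A B : IncChain X r) : Prop := A.Le B ∧ B.Le A

/-- `A ⊆ B`: every element of the chain `A` occurs in the chain `B`. -/
def Subset (A B : IncChain X r) : Prop :=
  ∀ (β : Ordinal.{u}) (hβ : β < A.len), ∃ (γ : Ordinal.{u}) (hγ : γ < B.len),
    B.val γ hγ = A.val β hβ

/-- `A` is cofinal in `B`. -/
def Cofinal (A B : IncChain X r) : Prop := A.Subset B ∧ B.Le A

/-- The cofinality of a chain: the least ordinal indexing a chain cofinal in it. -/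
noncomputable def cof (B : IncChain X r) : Ordinal.{u} :=
  sInf {α : Ordinal.{u} | ∃ A : IncChain X r, A.len = α ∧ A.Cofinal B}

/-- A maximal chain. -/
def Maximal (A : IncChain X r) : Prop := ∀ B : IncChain X r, A.Le B → B.Le A

theorem le_refl' (hrefl : ∀ x, r x x) (A : IncChain X r) : A.Le A :=
  fun β hβ => ⟨β, hβ, hrefl _⟩

theorem le_trans' (htrans : ∀ a b c, r a b → r b c → r a c) {A B C : IncChain X r}
    (h1 : A.Le B) (h2 : B.Le C) : A.Le C := fun β hβ => by
  obtain ⟨γ, hγ, h⟩ := h1 β hβ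
  obtain ⟨δ, hδ, h'⟩ := h2 γ hγ
  exact ⟨δ, hδ, htrans _ _ _ h h'⟩

theorem val_mono (hrefl : ∀ x, r x x) (A : IncChain X r) {β γ : Ordinal.{u}}
    (hβ : β < A.len) (hγ : γ < A.len) (h : β ≤ γ) : r (A.val β hβ) (A.val γ hγ) := by
  rcases eq_or_lt_of_le h with rfl | hlt
  · exact hrefl _
  · exact (A.inc β γ hβ hγ hlt).1

def sngl (x : X) : IncChain X r where
  len := 1
  val _ _ := x
  inc β γ hβ hγ h := absurd (h.trans_le (Ordinal.lt_one_iff_zero.mp hγ).le)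
    not_lt_zero

theorem len_countable
    (hcc : ∀ F : IncChain (IncChain X r) IncChain.Le, F.len.card ≤ Cardinal.aleph0)
    (C : IncChain X r) : C.len.card ≤ Cardinal.aleph0 := by
  classical
  let F : IncChain (IncChain X r) IncChain.Le :=
    { len := Ordinal.lift.{u+1} C.len
      val := fun β hβ => sngl (C.val (Ordinal.lt_lift_iff.mp hβ).choose
        (Ordinal.lt_lift_iff.mp hβ).choose_spec.1)
      inc := by
        intro β γ hβ hγ h
        have hβ' := (Ordinal.lt_lift_iff.mp hβ).choose_spec
        have hγ' := (Ordinal.lt_lift_iff.mp hγ).choose_spec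
        have hlt : (Ordinal.lt_lift_iff.mp hβ).choose < (Ordinal.lt_lift_iff.mp hγ).choose := by
          rw [← Ordinal.lift_lt.{u+1}, hβ'.2, hγ'.2]; exact h
        have hinc := C.inc _ _ hβ'.1 hγ'.1 hlt
        constructor
        · intro i hi
          exact ⟨0, zero_lt_one, hinc.1⟩
        · intro hle
          obtain ⟨j, hj, hr⟩ := hle 0 zero_lt_one
          exact hinc.2 hr }
  have h := hcc F
  have hlen : F.len = Ordinal.lift.{u+1} C.len := rfl
  rw [hlen, ← Ordinal.lift_card, ← Cardinal.lift_aleph0.{u+1, u}, Cardinal.lift_le] at h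
  exact h

theorem exists_ub (hrefl : ∀ x, r x x) (htrans : ∀ a b c, r a b → r b c → r a c)
    {δ : Ordinal.{u+1}} (hlim : Order.IsSuccLimit δ) (hδ : δ.card ≤ Cardinal.aleph0)
    (f : ∀ β : Ordinal.{u+1}, β < δ → IncChain X r)
    (hmono : ∀ β γ hβ hγ, β < γ → (f β hβ).Le (f γ hγ))
    (hstrict : ∀ β γ hβ hγ, β < γ → ¬ (f γ hγ).Le (f β hβ))
    (hcnt : ∀ β hβ, (f β hβ).len.card ≤ Cardinal.aleph0) :
    ∃ B : IncChain X r, ∀ β hβ, (f β hβ).Le B := by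
  classical
  -- enumerate Iio δ
  have hcd : Countable (Set.Iio δ) := by
    rw [← Cardinal.mk_le_aleph0_iff, Ordinal.mk_Iio_ordinal]
    rw [← Cardinal.lift_aleph0.{u+2, u+1}, Cardinal.lift_le]
    exact hδ
  have hne : Nonempty (Set.Iio δ) := ⟨⟨0, hlim.pos⟩⟩
  obtain ⟨e, he⟩ := exists_surjective_nat (Set.Iio δ)
  -- enumerate indices of each chain
  have idx : ∀ (β : Ordinal.{u+1}) (hβ : β < δ), (f β hβ).len ≠ 0 →
      ∃ g : ℕ → Set.Iio (f β hβ).len, Function.Surjective g := by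
    intro β hβ h0
    have : Countable (Set.Iio (f β hβ).len) := by
      rw [← Cardinal.mk_le_aleph0_iff, Ordinal.mk_Iio_ordinal]
      rw [← Cardinal.lift_aleph0.{u+1, u}, Cardinal.lift_le]
      exact hcnt β hβ
    have : Nonempty (Set.Iio (f β hβ).len) := ⟨⟨0, pos_iff_ne_zero.mpr h0⟩⟩
    exact exists_surjective_nat _
  let idxf : ∀ (β : Ordinal.{u+1}) (hβ : β < δ), (f β hβ).len ≠ 0 → ℕ → Set.Iio (f β hβ).len :=
    fun β hβ h0 => (idx β hβ h0).choose
  have idxf_surj : ∀ β hβ h0, Function.Surjective (idxf β hβ h0) :=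
    fun β hβ h0 => (idx β hβ h0).choose_spec
  -- the type of positions
  let T := Σ' (γ : Ordinal.{u+1}) (hγ : γ < δ) (i : Ordinal.{u}), i < (f γ hγ).len
  let b : T → X := fun p => (f p.1 p.2.1).val p.2.2.1 p.2.2.2
  -- key step
  have key : ∀ (p : T) (n k : ℕ), ∃ q : T,
      (r (b p) (b q) ∧ ¬ r (b q) (b p)) ∧
      ∀ h0 : (f (e n).1 (e n).2).len ≠ 0,
        r ((f (e n).1 (e n).2).val ((idxf (e n).1 (e n).2 h0 k) : Set.Iio _).1
            ((idxf (e n).1 (e n).2 h0 k)).2) (b q) := by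
    rintro ⟨γ, hγ, i, hi⟩ n k
    obtain ⟨β, hβ⟩ := e n
    set q0 := max γ β with hq0
    have hq : Order.succ q0 < δ := hlim.succ_lt (max_lt hγ hβ)
    have hγq : γ < Order.succ q0 := (le_max_left γ β).trans_lt (Order.lt_succ q0)
    have hβq : β < Order.succ q0 := (le_max_right γ β).trans_lt (Order.lt_succ q0)
    obtain ⟨iu, hiu, hru⟩ := hmono γ _ hγ hq hγq i hi
    -- witness of strictness
    have hwne := hstrict γ _ hγ hq hγq
    rw [IncChain.Le] at hwne
    push_neg at hwne
    obtain ⟨iw, hiw, hwprop⟩ := hwne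
    by_cases h0 : (f β hβ).len ≠ 0
    · obtain ⟨iv, hiv, hrv⟩ := hmono β _ hβ hq hβq (idxf β hβ h0 k).1 (idxf β hβ h0 k).2
      set m := max (max iu iv) iw with hm'
      have hm : m < (f _ hq).len := max_lt (max_lt hiu hiv) hiw
      refine ⟨⟨_, hq, m, hm⟩, ⟨?_, ?_⟩, ?_⟩
      · exact htrans _ _ _ hru (val_mono hrefl _ hiu hm ((le_max_left _ _).trans (le_max_left _ _)))
      · intro h
        exact hwprop i hi (htrans _ _ _ (val_mono hrefl _ hiw hm (le_max_right _ _)) h)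
      · intro h0'
        exact htrans _ _ _ hrv
          (val_mono hrefl _ hiv hm ((le_max_right _ _).trans (le_max_left _ _)))
    · set m := max iu iw with hm'
      have hm : m < (f _ hq).len := max_lt hiu hiw
      refine ⟨⟨_, hq, m, hm⟩, ⟨?_, ?_⟩, ?_⟩
      · exact htrans _ _ _ hru (val_mono hrefl _ hiu hm (le_max_left _ _))
      · intro h
        exact hwprop i hi (htrans _ _ _ (val_mono hrefl _ hiw hm (le_max_right _ _)) h)
      · intro h0'
        exact absurd h0' h0
  -- base point
  have h1δ : (1 : Ordinal.{u+1}) < δ := Ordinal.one_lt_of_isSuccLimit hlim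
  have hbase := hstrict 0 1 hlim.pos h1δ zero_lt_one
  rw [IncChain.Le] at hbase
  push_neg at hbase
  obtain ⟨i0, hi0, _⟩ := hbase
  let base : T := ⟨1, h1δ, i0, hi0⟩
  -- the sequence
  let seq : ℕ → T := fun m =>
    Nat.rec base (fun m ih => (key ih (Nat.unpair m).1 (Nat.unpair m).2).choose) m
  have seq_succ : ∀ m : ℕ,
      seq (m+1) = (key (seq m) (Nat.unpair m).1 (Nat.unpair m).2).choose := fun _ => rfl
  have step : ∀ m : ℕ,
      (r (b (seq m)) (b (seq (m+1))) ∧ ¬ r (b (seq (m+1))) (b (seq m))) ∧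
      ∀ h0 : (f (e (Nat.unpair m).1).1 (e (Nat.unpair m).1).2).len ≠ 0,
        r ((f (e (Nat.unpair m).1).1 (e (Nat.unpair m).1).2).val
            (idxf (e (Nat.unpair m).1).1 (e (Nat.unpair m).1).2 h0 (Nat.unpair m).2).1
            (idxf (e (Nat.unpair m).1).1 (e (Nat.unpair m).1).2 h0 (Nat.unpair m).2).2)
          (b (seq (m+1))) :=
    fun m => (key (seq m) (Nat.unpair m).1 (Nat.unpair m).2).choose_spec
  have smono : ∀ m m' : ℕ, m < m' → r (b (seq m)) (b (seq m')) ∧ ¬ r (b (seq m')) (b (seq m)) := by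
    intro m m' h
    induction m' with
    | zero => exact absurd h (Nat.not_lt_zero m)
    | succ m'' IH =>
      rcases Nat.lt_succ_iff_lt_or_eq.mp h with h' | rfl
      · have h1 := IH h'
        have h2 := (step m'').1
        refine ⟨htrans _ _ _ h1.1 h2.1, fun hr => ?_⟩
        exact h2.2 (htrans _ _ _ hr h1.1)
      · exact (step m).1
  -- build B
  let nOf : ∀ β : Ordinal.{u}, β < Ordinal.omega0 → ℕ := fun β hβ =>
    (Ordinal.lt_omega0.mp hβ).choose
  have nOf_spec : ∀ β hβ, β = (nOf β hβ : Ordinal.{u}) := fun β hβ =>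
    (Ordinal.lt_omega0.mp hβ).choose_spec
  have hBinc : ∀ (β γ : Ordinal.{u}) (hβ : β < Ordinal.omega0) (hγ : γ < Ordinal.omega0),
      β < γ → r (b (seq (nOf β hβ))) (b (seq (nOf γ hγ))) ∧
        ¬ r (b (seq (nOf γ hγ))) (b (seq (nOf β hβ))) := by
    intro β γ hβ hγ h
    have hlt : nOf β hβ < nOf γ hγ := by
      have := h
      rw [nOf_spec β hβ, nOf_spec γ hγ] at this
      exact_mod_cast this
    exact smono _ _ hlt
  let B : IncChain X r := ⟨Ordinal.omega0, fun β hβ => b (seq (nOf β hβ)), hBinc⟩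
  have hBval : ∀ (m : ℕ) (h : ((m : Ordinal.{u}) < Ordinal.omega0)),
      B.val m h = b (seq m) := by
    intro m h
    show b (seq (nOf (m : Ordinal.{u}) h)) = b (seq m)
    congr 1
    congr 1
    exact_mod_cast (nOf_spec (m : Ordinal.{u}) h).symm
  refine ⟨B, ?_⟩
  suffices hdom : ∀ n : ℕ, (f (e n).1 (e n).2).Le B by
    intro β hβ
    obtain ⟨n, hn⟩ := he ⟨β, hβ⟩
    have := hdom n
    rw [hn] at this
    exact this
  intro n i hi
  have h0 : (f (e n).1 (e n).2).len ≠ 0 := (zero_le.trans_lt hi).ne'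
  obtain ⟨k, hk⟩ := idxf_surj (e n).1 (e n).2 h0 ⟨i, hi⟩
  have hu := Nat.unpair_pair n k
  have tstep := (step (Nat.pair n k)).2
  rw [hu] at tstep
  have hval : (f (e n).1 (e n).2).val i hi
      = (f (e n).1 (e n).2).val ((idxf (e n).1 (e n).2 h0 k) : Set.Iio _).1
        (idxf (e n).1 (e n).2 h0 k).2 := by rw [hk]
  refine ⟨((Nat.pair n k + 1 : ℕ) : Ordinal.{u}), Ordinal.nat_lt_omega0 _, ?_⟩
  rw [hBval, hval]
  exact tstep h0

end IncChain

/-- if every increasing chain of chains in `IC(X, ≼)` is indexed by a countable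
ordinal, then every increasing chain `A` is `⊑`-below some maximal increasing chain `B`. -/
theorem stmt5 {X : Type u} {r : X → X → Prop}
    (hrefl : ∀ x, r x x) (htrans : ∀ a b c, r a b → r b c → r a c)
    (hcc : ∀ F : IncChain (IncChain X r) IncChain.Le, F.len.card ≤ Cardinal.aleph0)
    (A : IncChain X r) :
    ∃ B : IncChain X r, B.Maximal ∧ A.Le B := by
  classical
  by_contra hmax
  push_neg at hmax
  have hstep : ∀ C : IncChain X r, A.Le C →
      ∃ D : IncChain X r, (C.Le D ∧ ¬ D.Le C) ∧ A.Le D := by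
    intro C hAC
    have hnm : ¬ C.Maximal := fun h => hmax C h hAC
    rw [IncChain.Maximal] at hnm
    push_neg at hnm
    obtain ⟨D, hCD, hnot⟩ := hnm
    exact ⟨D, ⟨hCD, hnot⟩, IncChain.le_trans' htrans hAC hCD⟩
  let g : Ordinal.{u+1} → IncChain X r :=
    Ordinal.lt_wf.fix (fun α rec =>
      if h : ∃ D : IncChain X r, A.Le D ∧ ∀ β (hβ : β < α),
          (rec β hβ).Le D ∧ ¬ D.Le (rec β hβ) then h.choose else A)
  have gdef : ∀ α : Ordinal.{u+1}, g α =
      if h : ∃ D : IncChain X r, A.Le D ∧ ∀ β (hβ : β < α),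
          (g β).Le D ∧ ¬ D.Le (g β) then h.choose else A := fun α =>
    WellFounded.fix_eq _ _ α
  have good : ∀ α : Ordinal.{u+1}, α.card ≤ Cardinal.aleph0 →
      A.Le (g α) ∧ ∀ β (hβ : β < α), (g β).Le (g α) ∧ ¬ (g α).Le (g β) := by
    intro α
    induction α using Ordinal.induction with
    | h α IH =>
      intro hαc
      suffices hex : ∃ D : IncChain X r, A.Le D ∧ ∀ β (hβ : β < α),
          (g β).Le D ∧ ¬ D.Le (g β) by
        rw [gdef α, dif_pos hex]
        exact hex.choose_spec
      rcases Ordinal.zero_or_succ_or_isSuccLimit α with h0 | ⟨β, rfl⟩ | hlim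
      · subst h0
        exact ⟨A, IncChain.le_refl' hrefl A,
          fun β hβ => absurd hβ not_lt_zero⟩
      · have hβα : β < Order.succ β := Order.lt_succ β
        have hβc : β.card ≤ Cardinal.aleph0 :=
          (Ordinal.card_le_card hβα.le).trans hαc
        have hgβ := IH β hβα hβc
        obtain ⟨D, hD, hAD⟩ := hstep (g β) hgβ.1
        refine ⟨D, hAD, ?_⟩
        intro β' hβ'
        rcases eq_or_lt_of_le (Order.lt_succ_iff.mp hβ') with rfl | hlt
        · exact hD
        · have h2 := hgβ.2 β' hlt
          exact ⟨IncChain.le_trans' htrans h2.1 hD.1,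
            fun h => hD.2 (IncChain.le_trans' htrans h h2.1)⟩
      · have hcard : ∀ β : Ordinal.{u+1}, β < α → β.card ≤ Cardinal.aleph0 :=
          fun β hβ => (Ordinal.card_le_card hβ.le).trans hαc
        obtain ⟨B, hB⟩ := IncChain.exists_ub hrefl htrans hlim hαc
          (fun β hβ => g β)
          (fun β γ hβ hγ h => ((IH γ hγ (hcard γ hγ)).2 β h).1)
          (fun β γ hβ hγ h => ((IH γ hγ (hcard γ hγ)).2 β h).2)
          (fun β hβ => IncChain.len_countable hcc (g β))
        have hA0 : A.Le (g 0) := (IH 0 hlim.pos (by simp)).1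
        refine ⟨B, IncChain.le_trans' htrans hA0 (hB 0 hlim.pos), ?_⟩
        intro β hβ
        refine ⟨hB β hβ, fun h => ?_⟩
        have hsβ : Order.succ β < α := hlim.succ_lt hβ
        have hs := (IH _ hsβ (hcard _ hsβ)).2 β (Order.lt_succ β)
        exact hs.2 (IncChain.le_trans' htrans (hB _ hsβ) h)
  -- contradiction with an ω₁-indexed chain of chains
  let ω₁ : Ordinal.{u+1} := (Cardinal.aleph 1).ord
  have hcard1 : ∀ α : Ordinal.{u+1}, α < ω₁ → α.card ≤ Cardinal.aleph0 := by
    intro α hα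
    have := Cardinal.lt_ord.mp hα
    rw [← Cardinal.succ_aleph0] at this
    exact Order.lt_succ_iff.mp this
  let F : IncChain (IncChain X r) IncChain.Le :=
    ⟨ω₁, fun α _ => g α, by
      intro β γ hβ hγ h
      exact (good γ (hcard1 γ hγ)).2 β h⟩
  have hF := hcc F
  have : ω₁.card ≤ Cardinal.aleph0 := hF
  rw [Cardinal.card_ord] at this
  exact Cardinal.aleph0_lt_aleph_one.not_ge this
end

section
/- Let (σ_β)_{β<α} be an ordinal-indexed family of protagonist strategies in an initialized generalised safety/reachability game such that β < γ < α implies σ_β ≺ σ_γ (strict dominance). Then α is a countable ordinal. -/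
open scoped Classical

/-- A generalised safety/reachability game: a finite directed graph where every vertex has a
successor, a set `protag` of protagonist vertices (the rest belong to the antagonist), a set
`leaf` of leaves (each equipped with exactly a self-loop), an integer payoff attached to each
leaf, and an initial vertex `v0`. -/
structure GSRGame where
  V : Type
  fin : Finite V
  E : V → V → Prop
  succ_exists : ∀ v : V, ∃ w : V, E v w
  protag : V → Prop
  leaf : V → Prop
  leaf_loop : ∀ v w : V, leaf v → (E v w ↔ w = v)
  pay : V → ℤ
  v0 : V

namespace GSRGame

variable (g : GSRGame)

/-- A strategy: to each nonempty history it assigns a successor of the last vertex.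
(A protagonist strategy is only ever consulted at histories ending in a protagonist vertex,
an antagonist strategy at histories ending in an antagonist vertex.) -/
structure Strat where
  act : List g.V → g.V
  valid : ∀ (h : List g.V) (hne : h ≠ []), g.E (h.getLast hne) (act h)

/-- One step of the play extending history `h`: the protagonist moves according to `σ` at
protagonist vertices, the antagonist according to `τ` elsewhere. -/
noncomputable def step (σ τ : g.Strat) (h : List g.V) : List g.V :=
  h ++ [if g.protag (h.getLastD g.v0) then σ.act h else τ.act h]

/-- The history obtained after `k` steps of play by `(σ, τ)` extending `h`. -/
noncomputable def playList (σ τ : g.Strat) (h : List g.V) : ℕ → List g.V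
  | 0 => h
  | k + 1 => g.step σ τ (playList σ τ h k)

/-- The outcome (infinite path) induced by `(σ, τ)` from the history `h`. -/
noncomputable def play (σ τ : g.Strat) (h : List g.V) (k : ℕ) : g.V :=
  (g.playList σ τ h k).getLastD g.v0

/-- The payoff of an outcome: the payoff of the leaf it reaches, and `0` if it reaches
no leaf. -/
noncomputable def payoffOf (ρ : ℕ → g.V) : ℤ :=
  if hx : ∃ k : ℕ, g.leaf (ρ k) then g.pay (ρ (Nat.find hx)) else 0

/-- The payoff `p(h, σ, τ)` of the outcome induced by `(σ, τ)` from the history `h`. -/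
noncomputable def pval (σ τ : g.Strat) (h : List g.V) : ℤ :=
  g.payoffOf (g.play σ τ h)

/-- `h` is a history (a nonempty path starting at `v0`) compatible with the protagonist
strategy `σ`: every protagonist move along `h` agrees with `σ`. -/
def Compat (σ : g.Strat) (h : List g.V) : Prop :=
  h ≠ [] ∧ h.head? = some g.v0 ∧ List.Chain' g.E h ∧
    ∀ (p : List g.V) (v : g.V), (p ++ [v]) <+: h → p ≠ [] →
      g.protag (p.getLastD g.v0) → σ.act p = v

/-- The cooperative value `cVal(h, σ)`. -/
noncomputable def cVal (σ : g.Strat) (h : List g.V) : ℤ :=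
  sSup {z : ℤ | ∃ τ : g.Strat, z = g.pval σ τ h}

/-- The antagonistic value `aVal(h, σ)`. -/
noncomputable def aVal (σ : g.Strat) (h : List g.V) : ℤ :=
  sInf {z : ℤ | ∃ τ : g.Strat, z = g.pval σ τ h}

/-- The antagonistic value `aVal(h)` of a history. -/
noncomputable def aValH (h : List g.V) : ℤ :=
  sSup {z : ℤ | ∃ σ : g.Strat, z = g.aVal σ h}

/-- The antagonistic-cooperative value `acVal(h)` of a history. -/
noncomputable def acVal (h : List g.V) : ℤ :=
  sSup {z : ℤ | ∃ σ : g.Strat, g.aValH h ≤ g.aVal σ h ∧ z = g.cVal σ h}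

/-- Weak dominance `σ ⪯ σ'` (from the initial vertex `v0`). -/
def Dom (σ σ' : g.Strat) : Prop :=
  ∀ τ : g.Strat, g.pval σ τ [g.v0] ≤ g.pval σ' τ [g.v0]

/-- Dominance `σ ≺ σ'`. -/
def SDom (σ σ' : g.Strat) : Prop :=
  g.Dom σ σ' ∧ ∃ τ : g.Strat, g.pval σ τ [g.v0] < g.pval σ' τ [g.v0]

/-- Admissibility: `σ` is dominated by no strategy. -/
def Admissible (σ : g.Strat) : Prop := ¬ ∃ σ' : g.Strat, g.SDom σ σ'

/-- `h` is a witness of non-dominance of `σ₁` by `σ₂`. -/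
def NonDomWitness (σ₁ σ₂ : g.Strat) (h : List g.V) : Prop :=
  g.Compat σ₁ h ∧ g.Compat σ₂ h ∧ g.protag (h.getLastD g.v0) ∧
    σ₁.act h ≠ σ₂.act h ∧ g.aVal σ₂ h < g.cVal σ₁ h

/-- `h` is a witness of non-admissibility of `σ`. -/
def NonAdmWitness (σ : g.Strat) (h : List g.V) : Prop :=
  g.Compat σ h ∧
    g.aVal σ h ≤ g.cVal σ h ∧ g.cVal σ h ≤ g.aValH h ∧ g.aValH h ≤ g.acVal h ∧
    (g.aVal σ h < g.cVal σ h ∨ g.cVal σ h < g.aValH h ∨ g.aValH h < g.acVal h)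

end GSRGame

namespace GSRGame

variable {g : GSRGame}

lemma playList_zero (σ τ : g.Strat) (h : List g.V) : g.playList σ τ h 0 = h := rfl

lemma playList_succ (σ τ : g.Strat) (h : List g.V) (k : ℕ) :
    g.playList σ τ h (k + 1) = g.step σ τ (g.playList σ τ h k) := rfl

lemma prefix_playList (σ τ : g.Strat) (h : List g.V) (k : ℕ) :
    h <+: g.playList σ τ h k := by
  induction k with
  | zero => exact List.prefix_refl _
  | succ k ih =>
    refine ih.trans ?_
    rw [playList_succ, step]
    exact List.prefix_append _ _

lemma playList_ne_nil (σ τ : g.Strat) {h : List g.V} (hne : h ≠ []) (k : ℕ) :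
    g.playList σ τ h k ≠ [] := by
  intro e
  exact hne (List.prefix_nil.mp (e ▸ prefix_playList σ τ h k))

lemma playList_add (σ τ : g.Strat) (h : List g.V) (j k : ℕ) :
    g.playList σ τ h (j + k) = g.playList σ τ (g.playList σ τ h j) k := by
  induction k with
  | zero => rfl
  | succ k ih => rw [Nat.add_succ, playList_succ, ih, playList_succ]

lemma getLastD_eq_getLast {α : Type*} {l : List α} (hne : l ≠ []) (d : α) :
    l.getLastD d = l.getLast hne := by
  cases l with
  | nil => exact absurd rfl hne
  | cons a l => rw [List.getLastD_cons, List.getLast_eq_getLastD]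

lemma play_leaf_succ (σ τ : g.Strat) {h : List g.V} (hne : h ≠ []) (k : ℕ)
    (hl : g.leaf (g.play σ τ h k)) : g.play σ τ h (k + 1) = g.play σ τ h k := by
  have hpl : g.playList σ τ h k ≠ [] := playList_ne_nil σ τ hne k
  have hlast : (g.playList σ τ h k).getLastD g.v0 = (g.playList σ τ h k).getLast hpl :=
    getLastD_eq_getLast hpl _
  have hstep : g.play σ τ h (k + 1) =
      (if g.protag ((g.playList σ τ h k).getLastD g.v0) then σ.act (g.playList σ τ h k)
        else τ.act (g.playList σ τ h k)) := by
    show (g.step σ τ (g.playList σ τ h k)).getLastD g.v0 = _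
    rw [step]
    exact List.getLastD_concat
  have hE : g.E (g.play σ τ h k)
      (if g.protag ((g.playList σ τ h k).getLastD g.v0) then σ.act (g.playList σ τ h k)
        else τ.act (g.playList σ τ h k)) := by
    show g.E ((g.playList σ τ h k).getLastD g.v0) _
    rw [hlast]
    split
    · exact σ.valid _ hpl
    · exact τ.valid _ hpl
  rw [hstep, (g.leaf_loop _ _ hl).mp hE]

lemma play_absorb (σ τ : g.Strat) {h : List g.V} (hne : h ≠ []) {i j : ℕ} (hij : i ≤ j)
    (hl : g.leaf (g.play σ τ h i)) : g.play σ τ h j = g.play σ τ h i := by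
  obtain ⟨d, rfl⟩ : ∃ d, j = i + d := ⟨j - i, by omega⟩
  clear hij
  induction d with
  | zero => rfl
  | succ d ih =>
    rw [← Nat.add_assoc, play_leaf_succ σ τ hne (i + d) (ih ▸ hl), ih]

lemma payoffOf_shift (ρ : ℕ → g.V)
    (habs : ∀ i j, i ≤ j → g.leaf (ρ i) → ρ j = ρ i) (d : ℕ) :
    g.payoffOf (fun k => ρ (d + k)) = g.payoffOf ρ := by
  by_cases hx : ∃ k, g.leaf (ρ k)
  · have hx' : ∃ k, g.leaf ((fun k => ρ (d + k)) k) := by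
      refine ⟨Nat.find hx, ?_⟩
      simpa [habs (Nat.find hx) (d + Nat.find hx) (Nat.le_add_left _ _) (Nat.find_spec hx)]
        using Nat.find_spec hx
    simp only [payoffOf]
    rw [dif_pos hx, dif_pos hx']
    have h1 : g.leaf (ρ (d + Nat.find hx')) := Nat.find_spec hx'
    have h2 : Nat.find hx ≤ d + Nat.find hx' := Nat.find_le h1
    show g.pay (ρ (d + Nat.find hx')) = g.pay (ρ (Nat.find hx))
    rw [habs _ _ h2 (Nat.find_spec hx)]
  · have hx' : ¬ ∃ k, g.leaf ((fun k => ρ (d + k)) k) := fun ⟨k, hk⟩ => hx ⟨d + k, hk⟩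
    simp only [payoffOf]
    rw [dif_neg hx, dif_neg hx']

lemma pval_playList (σ τ : g.Strat) {h : List g.V} (hne : h ≠ []) (d : ℕ) :
    g.pval σ τ (g.playList σ τ h d) = g.pval σ τ h := by
  have hplay : g.play σ τ (g.playList σ τ h d) = fun k => g.play σ τ h (d + k) :=
    funext fun k => by unfold play; rw [playList_add]
  unfold pval
  rw [hplay]
  exact payoffOf_shift (g.play σ τ h) (fun i j hij hl => play_absorb σ τ hne hij hl) d

lemma playList_congr (σ τ1 τ2 : g.Strat) (l : List g.V)
    (hagree : ∀ q, l <+: q → τ1.act q = τ2.act q) (k : ℕ) :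
    g.playList σ τ1 l k = g.playList σ τ2 l k := by
  induction k with
  | zero => rfl
  | succ k ih =>
    rw [playList_succ, playList_succ, ← ih]
    unfold step
    rw [hagree _ (prefix_playList σ τ1 l k)]

lemma pval_congr (σ τ1 τ2 : g.Strat) (l : List g.V)
    (hagree : ∀ q, l <+: q → τ1.act q = τ2.act q) :
    g.pval σ τ1 l = g.pval σ τ2 l := by
  have hplay : g.play σ τ1 l = g.play σ τ2 l :=
    funext fun k => by unfold play; rw [playList_congr σ τ1 τ2 l hagree k]
  unfold pval
  rw [hplay]

lemma playList_one_protag (σ τ : g.Strat) (h : List g.V)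
    (hp : g.protag (h.getLastD g.v0)) : g.playList σ τ h 1 = h ++ [σ.act h] := by
  rw [show (1 : ℕ) = 0 + 1 from rfl, playList_succ, playList_zero, step, if_pos hp]

lemma pval_extend_protag (σ τ : g.Strat) {h : List g.V} (hne : h ≠ [])
    (hp : g.protag (h.getLastD g.v0)) :
    g.pval σ τ (h ++ [σ.act h]) = g.pval σ τ h := by
  rw [← playList_one_protag σ τ h hp]
  exact pval_playList σ τ hne 1

lemma compat_playList (σ τ : g.Strat) (d : ℕ) :
    g.Compat σ (g.playList σ τ [g.v0] d) := by
  refine ⟨playList_ne_nil σ τ (by simp) d, ?_, ?_, ?_⟩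
  · obtain ⟨t, ht⟩ := prefix_playList σ τ [g.v0] d
    rw [← ht]
    rfl
  · induction d with
    | zero => exact List.isChain_singleton _
    | succ d ih =>
      rw [playList_succ, step]
      refine List.IsChain.append ih (List.isChain_singleton _) ?_
      intro x hx y hy
      have hpl : g.playList σ τ [g.v0] d ≠ [] := playList_ne_nil σ τ (by simp) d
      rw [List.getLast?_eq_getLast hpl] at hx
      simp only [List.head?_cons, Option.mem_some_iff] at hx hy
      subst hx; subst hy
      split
      · exact σ.valid _ hpl
      · exact τ.valid _ hpl
  · induction d with
    | zero =>
      intro p v hpv hpne _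
      rw [playList_zero] at hpv
      have := hpv.length_le
      simp only [List.length_append, List.length_singleton, List.length_cons,
        List.length_nil] at this
      exact absurd (List.length_eq_zero_iff.mp (by omega)) hpne
    | succ d ih =>
      intro p v hpv hpne hprot
      rw [playList_succ, step] at hpv
      by_cases hlen : (p ++ [v]).length ≤ (g.playList σ τ [g.v0] d).length
      · exact ih p v (List.prefix_of_prefix_length_le hpv (List.prefix_append _ _) hlen) hpne
          hprot
      · have hlen2 : (p ++ [v]).length =
            ((g.playList σ τ [g.v0] d) ++
              [if g.protag ((g.playList σ τ [g.v0] d).getLastD g.v0) then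
                σ.act (g.playList σ τ [g.v0] d) else τ.act (g.playList σ τ [g.v0] d)]).length := by
          have := hpv.length_le
          simp only [List.length_append, List.length_singleton] at *
          omega
        have heq := hpv.eq_of_length hlen2
        obtain ⟨rfl, hv⟩ := List.append_inj' heq rfl
        simp only [List.cons.injEq, and_true] at hv
        rw [hv, if_pos hprot]

lemma diverge (σ σ' τ : g.Strat)
    (hlt : g.pval σ τ [g.v0] ≠ g.pval σ' τ [g.v0]) :
    ∃ h : List g.V, g.Compat σ h ∧ g.Compat σ' h ∧ g.protag (h.getLastD g.v0) ∧
      σ.act h ≠ σ'.act h ∧ g.pval σ τ h = g.pval σ τ [g.v0] ∧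
      g.pval σ' τ h = g.pval σ' τ [g.v0] := by
  have hex : ∃ k, g.playList σ τ [g.v0] k ≠ g.playList σ' τ [g.v0] k := by
    by_contra hall
    push_neg at hall
    apply hlt
    unfold pval play
    exact congrArg _ (funext fun k => by rw [hall k])
  have hk0 : Nat.find hex ≠ 0 := by
    intro e
    exact (e ▸ Nat.find_spec hex) rfl
  have hkd : Nat.find hex = (Nat.find hex - 1) + 1 := by omega
  set d := Nat.find hex - 1 with hd
  have heq : g.playList σ τ [g.v0] d = g.playList σ' τ [g.v0] d :=
    not_ne_iff.mp (Nat.find_min hex (by omega))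
  have hk : g.playList σ τ [g.v0] (d + 1) ≠ g.playList σ' τ [g.v0] (d + 1) :=
    hkd ▸ Nat.find_spec hex
  rw [playList_succ, playList_succ, ← heq] at hk
  unfold step at hk
  set h := g.playList σ τ [g.v0] d with hhd
  have hwne : (if g.protag (h.getLastD g.v0) then σ.act h else τ.act h) ≠
      (if g.protag (h.getLastD g.v0) then σ'.act h else τ.act h) := by
    intro e
    exact hk (by rw [e])
  have hprot : g.protag (h.getLastD g.v0) := by
    by_contra hnp
    rw [if_neg hnp, if_neg hnp] at hwne
    exact hwne rfl
  rw [if_pos hprot, if_pos hprot] at hwne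
  refine ⟨h, compat_playList σ τ d, heq ▸ compat_playList σ' τ d, hprot, hwne,
    pval_playList σ τ (by simp) d, ?_⟩
  rw [heq]
  exact pval_playList σ' τ (by simp) d

lemma getElem_idx_congr {α : Type*} (l : List α) {i j : ℕ} (hi : i < l.length)
    (e : i = j) : l[i]'hi = l[j]'(e ▸ hi) := by subst e; rfl

lemma dom_lift {σ σ' : g.Strat} (hdom : g.Dom σ σ') {h : List g.V}
    (hσ : g.Compat σ h) (hσ' : g.Compat σ' h) (τ : g.Strat) :
    g.pval σ τ h ≤ g.pval σ' τ h := by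
  have hne : h ≠ [] := hσ.1
  have hchain : List.Chain' g.E h := hσ.2.2.1
  have hvalid : ∀ (q : List g.V) (hqne : q ≠ []),
      g.E (q.getLast hqne)
        (if hq : q.length < h.length ∧ q <+: h then h[q.length]'hq.1 else τ.act q) := by
    intro q hqne
    split
    case isTrue hq =>
      obtain ⟨hql, hqp⟩ := hq
      have hq1 : 0 < q.length := List.length_pos_iff.mpr hqne
      have hlast : q.getLast hqne = h[q.length - 1]'(by omega) := by
        rw [List.getLast_eq_getElem]
        exact hqp.getElem (by omega)
      rw [hlast]
      have hc := List.isChain_iff_getElem.mp hchain (q.length - 1) (by omega)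
      have e1 := getElem_idx_congr h (i := q.length - 1 + 1) (j := q.length)
        (by omega) (by omega)
      rw [e1] at hc
      exact hc
    case isFalse => exact τ.valid q hqne
  set τh : g.Strat := ⟨fun q =>
    if hq : q.length < h.length ∧ q <+: h then h[q.length]'hq.1 else τ.act q, hvalid⟩ with hτh
  have hagree : ∀ q, h <+: q → τh.act q = τ.act q := by
    intro q hq
    show (if hq : q.length < h.length ∧ q <+: h then h[q.length]'hq.1 else τ.act q) = τ.act q
    rw [dif_neg]
    rintro ⟨hlt, -⟩
    exact absurd hq.length_le (by omega)
  have htake : ∀ (σ₀ : g.Strat), g.Compat σ₀ h → ∀ k, k + 1 ≤ h.length →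
      g.playList σ₀ τh [g.v0] k = h.take (k + 1) := by
    intro σ₀ hc k
    induction k with
    | zero =>
      intro _
      have h1 : h.take 1 = [g.v0] := by
        rw [List.take_one, hc.2.1]
        rfl
      rw [playList_zero, h1]
    | succ k ih =>
      intro hk1
      have hkle := ih (by omega)
      have hqp : h.take (k + 1) <+: h := List.take_prefix _ _
      have hqlen : (h.take (k + 1)).length = k + 1 := by
        rw [List.length_take]; omega
      have hqne : h.take (k + 1) ≠ [] := by
        intro e; rw [e] at hqlen; simp at hqlen
      have htk : h.take (k + 1) = h.take k ++ [h[k]'(by omega)] := by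
        rw [← List.concat_eq_append]
        exact (List.take_concat_get (l := h) (i := k) (by omega)).symm
      have htk2 : h.take (k + 2) = h.take (k + 1) ++ [h[k + 1]'(by omega)] := by
        rw [← List.concat_eq_append]
        exact (List.take_concat_get (l := h) (i := k + 1) (by omega)).symm
      rw [playList_succ, hkle, step, htk2]
      refine congrArg (fun z => h.take (k + 1) ++ [z]) ?_
      by_cases hpq : g.protag ((h.take (k + 1)).getLastD g.v0)
      · rw [if_pos hpq]
        exact hc.2.2.2 (h.take (k + 1)) _ (by rw [← htk2]; exact List.take_prefix _ _) hqne hpq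
      · rw [if_neg hpq]
        show (if hq : (h.take (k + 1)).length < h.length ∧ h.take (k + 1) <+: h then
            h[(h.take (k + 1)).length]'hq.1 else τ.act (h.take (k + 1))) = _
        rw [dif_pos ⟨by omega, hqp⟩]
        exact getElem_idx_congr h (by omega) hqlen
  have hfull : ∀ (σ₀ : g.Strat), g.Compat σ₀ h →
      g.playList σ₀ τh [g.v0] (h.length - 1) = h := by
    intro σ₀ hc
    have hl1 : 0 < h.length := List.length_pos_iff.mpr hne
    rw [htake σ₀ hc (h.length - 1) (by omega)]
    have e : h.length - 1 + 1 = h.length := by omega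
    rw [e, List.take_length]
  have key : ∀ (σ₀ : g.Strat), g.Compat σ₀ h → g.pval σ₀ τh [g.v0] = g.pval σ₀ τ h := by
    intro σ₀ hc
    have h1 := pval_playList σ₀ τh (h := [g.v0]) (by simp) (h.length - 1)
    rw [hfull σ₀ hc] at h1
    rw [← h1]
    exact pval_congr σ₀ τh τ h hagree
  have hd := hdom τh
  rw [key σ hσ, key σ' hσ'] at hd
  exact hd

lemma key_contra {σ1 σ2 : g.Strat} {h : List g.V} {x : g.V} {a : ℤ}
    (hc1 : g.Compat σ1 h) (hc2 : g.Compat σ2 h) (hp : g.protag (h.getLastD g.v0))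
    (hx1 : σ1.act h = x) (hx2 : σ2.act h ≠ x)
    (τβ τγ : g.Strat) (hb : a < g.pval σ1 τβ h) (ha : g.pval σ2 τγ h = a)
    (hdom : g.Dom σ1 σ2) : False := by
  have hne : h ≠ [] := hc1.1
  set τs : g.Strat := ⟨fun q => if (h ++ [x]) <+: q then τβ.act q else τγ.act q, by
    intro q hq
    show g.E _ (if (h ++ [x]) <+: q then τβ.act q else τγ.act q)
    split
    · exact τβ.valid q hq
    · exact τγ.valid q hq⟩ with hτs
  have e1 : g.pval σ1 τs h = g.pval σ1 τβ h := by
    have hstep : h ++ [σ1.act h] = h ++ [x] := by rw [hx1]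
    calc g.pval σ1 τs h = g.pval σ1 τs (h ++ [σ1.act h]) :=
          (pval_extend_protag σ1 τs hne hp).symm
      _ = g.pval σ1 τβ (h ++ [σ1.act h]) := by
          rw [hstep]
          refine pval_congr σ1 τs τβ _ (fun q hq => ?_)
          show (if (h ++ [x]) <+: q then τβ.act q else τγ.act q) = τβ.act q
          exact if_pos hq
      _ = g.pval σ1 τβ h := pval_extend_protag σ1 τβ hne hp
  have e2 : g.pval σ2 τs h = g.pval σ2 τγ h := by
    have hnp : ∀ q, (h ++ [σ2.act h]) <+: q → ¬ (h ++ [x]) <+: q := by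
      intro q h1 h2
      apply hx2
      have h3 := List.prefix_of_prefix_length_le h2 h1 (by simp)
      have h4 := h3.eq_of_length (by simp)
      have h5 := List.append_cancel_left h4
      simpa using h5.symm
    calc g.pval σ2 τs h = g.pval σ2 τs (h ++ [σ2.act h]) :=
          (pval_extend_protag σ2 τs hne hp).symm
      _ = g.pval σ2 τγ (h ++ [σ2.act h]) := by
          refine pval_congr σ2 τs τγ _ (fun q hq => ?_)
          show (if (h ++ [x]) <+: q then τβ.act q else τγ.act q) = τγ.act q
          exact if_neg (hnp q hq)
      _ = g.pval σ2 τγ h := pval_extend_protag σ2 τγ hne hp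
  have hle := dom_lift hdom hc1 hc2 τs
  rw [e1, e2, ha] at hle
  omega

end GSRGame

/-- any ordinal-indexed family of strategies `(σ_β)_{β<α}` with `β < γ`
implying `σ_β ≺ σ_γ` is indexed by a countable ordinal `α`. -/
theorem stmt13 (g : GSRGame) (α : Ordinal.{0})
    (f : (β : Ordinal.{0}) → β < α → g.Strat)
    (hfam : ∀ (β γ : Ordinal.{0}) (hβ : β < α) (hγ : γ < α), β < γ →
      g.SDom (f β hβ) (f γ hγ)) :
    α.card ≤ Cardinal.aleph0 := by
  classical
  haveI : Finite g.V := g.fin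
  have hsucc_lt : ∀ β : Ordinal.{0}, β < β + 1 := fun β => by
    rw [Ordinal.add_one_eq_succ]; exact Order.lt_succ β
  -- existence of a countable witness for every non-maximal index
  have main : ∀ (β : Ordinal.{0}) (hβ : β < α) (hβ1 : β + 1 < α),
      ∃ w : List g.V × g.V × ℤ, g.Compat (f β hβ) w.1 ∧ g.Compat (f (β + 1) hβ1) w.1 ∧
        g.protag (w.1.getLastD g.v0) ∧ (f β hβ).act w.1 ≠ w.2.1 ∧
        (f (β + 1) hβ1).act w.1 = w.2.1 ∧
        ∃ τ : g.Strat, g.pval (f β hβ) τ w.1 = w.2.2 ∧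
          w.2.2 < g.pval (f (β + 1) hβ1) τ w.1 := by
    intro β hβ hβ1
    obtain ⟨hdom, τ, hlt⟩ := hfam β (β + 1) hβ hβ1 (hsucc_lt β)
    obtain ⟨h, hc1, hc2, hp, hact, he1, he2⟩ :=
      GSRGame.diverge (f β hβ) (f (β + 1) hβ1) τ (ne_of_lt hlt)
    refine ⟨⟨h, (f (β + 1) hβ1).act h, g.pval (f β hβ) τ h⟩, hc1, hc2, hp, hact, rfl,
      τ, rfl, ?_⟩
    rw [he1, he2]
    exact hlt
  choose W hW1 hW2 hW3 hW4 hW5 hW6 using main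
  -- the witness map is injective on comparable pairs
  have inj : ∀ (β γ : Ordinal.{0}) (hβ : β < α) (hγ : γ < α) (hβ1 : β + 1 < α)
      (hγ1 : γ + 1 < α), β < γ → W β hβ hβ1 ≠ W γ hγ hγ1 := by
    intro β γ hβ hγ hβ1 hγ1 hlt heq
    obtain ⟨τβ, -, hbβ⟩ := hW6 β hβ hβ1
    obtain ⟨τγ, haγ, -⟩ := hW6 γ hγ hγ1
    have hc1 : g.Compat (f (β + 1) hβ1) (W β hβ hβ1).1 := hW2 β hβ hβ1
    have hc2 : g.Compat (f γ hγ) (W β hβ hβ1).1 := by rw [heq]; exact hW1 γ hγ hγ1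
    have hx2 : (f γ hγ).act (W β hβ hβ1).1 ≠ (W β hβ hβ1).2.1 := by
      rw [heq]; exact hW4 γ hγ hγ1
    have haγ' : g.pval (f γ hγ) τγ (W β hβ hβ1).1 = (W β hβ hβ1).2.2 := by
      rw [heq]; exact haγ
    have hdom : g.Dom (f (β + 1) hβ1) (f γ hγ) := by
      have hle : β + 1 ≤ γ := by
        rw [Ordinal.add_one_eq_succ]; exact Order.succ_le_iff.mpr hlt
      rcases lt_or_eq_of_le hle with h' | h'
      · exact (hfam (β + 1) γ hβ1 hγ h').1
      · subst h'
        exact fun τ => le_refl _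
    exact GSRGame.key_contra hc1 hc2 (hW3 β hβ hβ1) (hW5 β hβ hβ1) hx2 τβ τγ hbβ haγ' hdom
  -- build an injection from `α.toType` into a countable type
  let e := (Ordinal.ToType.mk (o := α)).symm
  let F : α.ToType → Option (List g.V × g.V × ℤ) := fun i =>
    if h1 : (e i).1 + 1 < α then some (W (e i).1 (e i).2 h1) else none
  have hF : Function.Injective F := by
    intro i j hij
    have hij' : (e i).1 = (e j).1 → i = j := by
      intro hval
      have : e i = e j := Subtype.ext hval
      exact e.injective this
    simp only [F] at hij
    by_cases h1 : (e i).1 + 1 < α <;> by_cases h2 : (e j).1 + 1 < α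
    · rw [dif_pos h1, dif_pos h2] at hij
      have heq := Option.some.inj hij
      rcases lt_trichotomy ((e i).1 : Ordinal) ((e j).1 : Ordinal) with hl | hl | hl
      · exact absurd heq (inj _ _ (e i).2 (e j).2 h1 h2 hl)
      · exact hij' hl
      · exact absurd heq.symm (inj _ _ (e j).2 (e i).2 h2 h1 hl)
    · rw [dif_pos h1, dif_neg h2] at hij; exact absurd hij (by simp)
    · rw [dif_neg h1, dif_pos h2] at hij; exact absurd hij (by simp)
    · refine hij' ?_
      have hi : ((e i).1 : Ordinal) + 1 = α :=
        le_antisymm (by rw [Ordinal.add_one_eq_succ]; exact Order.succ_le_iff.mpr (e i).2)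
          (not_lt.mp h1)
      have hj : ((e j).1 : Ordinal) + 1 = α :=
        le_antisymm (by rw [Ordinal.add_one_eq_succ]; exact Order.succ_le_iff.mpr (e j).2)
          (not_lt.mp h2)
      rcases lt_trichotomy ((e i).1 : Ordinal) ((e j).1 : Ordinal) with hl | hl | hl
      · have : ((e i).1 : Ordinal) + 1 ≤ (e j).1 := by
          rw [Ordinal.add_one_eq_succ]; exact Order.succ_le_iff.mpr hl
        rw [hi] at this
        exact absurd (Set.mem_Iio.mp (e j).2) (not_lt.mpr this)
      · exact hl
      · have : ((e j).1 : Ordinal) + 1 ≤ (e i).1 := by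
          rw [Ordinal.add_one_eq_succ]; exact Order.succ_le_iff.mpr hl
        rw [hj] at this
        exact absurd (Set.mem_Iio.mp (e i).2) (not_lt.mpr this)
  have hcard := Cardinal.mk_le_of_injective hF
  rw [Cardinal.mk_toType] at hcard
  exact hcard.trans Cardinal.mk_le_aleph0
end
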